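/- For the 5-cycle graph C₅ with adjacency matrix Γ over ℤ/2ℤ, the minimum over nonzero k ∈ ker([I₅ | Γ]) of the number of indices i ∈ {1,…,5} with (k_i, k_{i+5}) ≠ (0,0) equals 3. -/
import Mathlib

set_option maxRecDepth 40000 in
lemma lb2 : ∀ x : Fin 5 → ZMod 2, x ≠ 0 →
    3 ≤ (Finset.univ.filter fun i =>
      (((Matrix.of ![![0,1,0,0,1],![1,0,1,0,0],![0,1,0,1,0],![0,0,1,0,1],![1,0,0,1,0]]).mulVec x) i, x i)
        ≠ ((0:ZMod 2), (0:ZMod 2))).card := by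
  decide

/-- The diagonal distance of the 5-cycle over ℤ/2ℤ is 3. -/
theorem stmt_14 (Γ : Matrix (Fin 5) (Fin 5) (ZMod 2))
    (hΓ : Γ = Matrix.of ![![0,1,0,0,1],![1,0,1,0,0],![0,1,0,1,0],![0,0,1,0,1],![1,0,0,1,0]]) :
    sInf {m : ℕ | ∃ k : (Fin 5 → ZMod 2) × (Fin 5 → ZMod 2), k ≠ 0 ∧
        k.1 + Γ.mulVec k.2 = 0 ∧
        m = (Finset.univ.filter fun i => (k.1 i, k.2 i) ≠ (0, 0)).card} = 3 := by
  subst hΓ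
  set Γ := (Matrix.of ![![0,1,0,0,1],![1,0,1,0,0],![0,1,0,1,0],![0,0,1,0,1],![1,0,0,1,0]] :
    Matrix (Fin 5) (Fin 5) (ZMod 2)) with hΓ
  have h3 : (3:ℕ) ∈ {m : ℕ | ∃ k : (Fin 5 → ZMod 2) × (Fin 5 → ZMod 2), k ≠ 0 ∧
      k.1 + Γ.mulVec k.2 = 0 ∧
      m = (Finset.univ.filter fun i => (k.1 i, k.2 i) ≠ (0, 0)).card} := by
    refine ⟨(![0,1,0,0,1], ![1,0,0,0,0]), ?_, ?_, ?_⟩ <;> (try rw [hΓ]) <;> decide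
  refine le_antisymm (Nat.sInf_le h3) (le_csInf ⟨3, h3⟩ ?_)
  rintro m ⟨k, hk, heq, rfl⟩
  have h1 : k.1 = Γ.mulVec k.2 := by
    have := eq_neg_of_add_eq_zero_left heq
    rwa [CharTwo.neg_eq] at this
  have h2 : k.2 ≠ 0 := by
    rintro h0
    apply hk
    have : k.1 = 0 := by rw [h1, h0, Matrix.mulVec_zero]
    exact Prod.ext this h0
  rw [h1]
  exact lb2 k.2 h2
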